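/- Let c₁ > 0, c₀ > 0, and d₁, d₀, α, y be real numbers satisfying: c₁·α + c₀ > 0; c₁²·y ≤ c₁·(d₁ + α) - c₀; and (c₁·α + c₀)·y < α² + d₁·α + d₀. Define the complex rational function G̃(ν) = (c₁·ν + (c₁·α + c₀)) / (ν² + (d₁ + 2α - c₁·y)·ν + (α² + d₁·α + d₀ - (c₁·α + c₀)·y)). Then: (1) every complex root ν of the denominator ν² + (d₁ + 2α - c₁y)·ν + (α² + d₁α + d₀ - (c₁α + c₀)y) satisfies Re ν < 0; and (2) for every real ω, the denominator evaluated at iω is nonzero and Re(G̃(iω)) ≥ 0. -/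

import Mathlib

/-- For a source device `G(s) = (c₁s + c₀)/(s² + d₁s + d₀)` with
`c₁, c₀ > 0`, the shifted-LHP modified device
`G̃(ν) = (c₁ν + (c₁α + c₀))/(ν² + (d₁ + 2α - c₁y)ν + (α² + d₁α + d₀ - (c₁α + c₀)y))`
is a positive function under the stated constraints on `α` and `y`: all poles lie in the
open left half-plane and `Re G̃(iω) ≥ 0` on the imaginary axis. -/
theorem shiftedLHP_modified_device_positive (c1 c0 d1 d0 α y : ℝ)
    (hc1 : 0 < c1) (hc0 : 0 < c0)
    (h1 : 0 < c1 * α + c0)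
    (h2 : c1 ^ 2 * y ≤ c1 * (d1 + α) - c0)
    (h3 : (c1 * α + c0) * y < α ^ 2 + d1 * α + d0) :
    let den : ℂ → ℂ := fun ν =>
      ν ^ 2 + ((d1 + 2 * α - c1 * y : ℝ) : ℂ) * ν
        + ((α ^ 2 + d1 * α + d0 - (c1 * α + c0) * y : ℝ) : ℂ)
    let num : ℂ → ℂ := fun ν => (c1 : ℂ) * ν + ((c1 * α + c0 : ℝ) : ℂ)
    (∀ ν : ℂ, den ν = 0 → ν.re < 0) ∧
    (∀ ω : ℝ,
      den (Complex.I * ω) ≠ 0 ∧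
      0 ≤ (num (Complex.I * ω) / den (Complex.I * ω)).re) := by
  intro den num
  have hc : 0 < α ^ 2 + d1 * α + d0 - (c1 * α + c0) * y := by linarith
  have hb : 0 < d1 + 2 * α - c1 * y := by
    by_contra h
    push_neg at h
    nlinarith [mul_nonpos_of_nonneg_of_nonpos (le_of_lt hc1) h]
  constructor
  · intro ν hν
    have hre := congrArg Complex.re hν
    have him := congrArg Complex.im hν
    simp [den, pow_two, Complex.add_re, Complex.add_im, Complex.mul_re,
      Complex.mul_im, Complex.ofReal_re, Complex.ofReal_im] at hre him
    set x := ν.re with hxdef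
    set t := ν.im with htdef
    by_contra hx
    push_neg at hx
    have e2t : (x * t + t * x + (d1 + 2 * α - c1 * y) * t) * t = 0 := by
      rw [him]; ring
    nlinarith [mul_nonneg hb.le (mul_nonneg hx hx),
      mul_nonneg hx (mul_self_nonneg t), mul_pos hb hc,
      mul_nonneg (mul_nonneg hb.le hb.le) hx]
  · intro ω
    have hden : den (Complex.I * ω)
        = Complex.mk (α ^ 2 + d1 * α + d0 - (c1 * α + c0) * y - ω ^ 2)
            ((d1 + 2 * α - c1 * y) * ω) := by
      simp [den, Complex.ext_iff, pow_two, Complex.add_re, Complex.add_im,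
        Complex.mul_re, Complex.mul_im]
      ring
    have hne : den (Complex.I * ω) ≠ 0 := by
      rw [hden]
      intro h
      have h4 := congrArg Complex.re h
      have h5 := congrArg Complex.im h
      simp at h4 h5
      rcases h5 with h6 | h6
      · linarith
      · rw [h6] at h4; nlinarith
    refine ⟨hne, ?_⟩
    have hnum_re : (num (Complex.I * ω)).re = c1 * α + c0 := by
      simp [num, Complex.add_re, Complex.mul_re]
    have hnum_im : (num (Complex.I * ω)).im = c1 * ω := by
      simp [num, Complex.add_im, Complex.mul_im]
    rw [Complex.div_re, hnum_re, hnum_im, hden, ← add_div]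
    apply div_nonneg _ (Complex.normSq_nonneg _)
    have key : 0 ≤ c1 * (d1 + 2 * α - c1 * y) - (c1 * α + c0) := by nlinarith
    show 0 ≤ ((c1 * α + c0) * (α ^ 2 + d1 * α + d0 - (c1 * α + c0) * y - ω ^ 2)
        + c1 * ω * ((d1 + 2 * α - c1 * y) * ω))
    have heq : (c1 * α + c0) * (α ^ 2 + d1 * α + d0 - (c1 * α + c0) * y - ω ^ 2)
        + c1 * ω * ((d1 + 2 * α - c1 * y) * ω)
        = (c1 * α + c0) * (α ^ 2 + d1 * α + d0 - (c1 * α + c0) * y)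
          + (c1 * (d1 + 2 * α - c1 * y) - (c1 * α + c0)) * ω ^ 2 := by ring
    rw [heq]
    nlinarith [mul_pos h1 hc, mul_nonneg key (sq_nonneg ω)]
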